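/- Assume ν × ξ ≠ 0 (so that λ > 1 and k₋ > 0), and let h > 0 and ε ∈ ℝ. Define A₀ : ℝ → Matrix (Fin 4) (Fin 4) ℂ by A₀(τ') := e^{(τ'−ε)ρ₋/h} · k₋⁻¹ · Π₋ P₊. Then: (i) A₀ is differentiable and h A₀′(τ') = L₀ A₀(τ') for all τ' ∈ ℝ; (ii) P₊ A₀(ε) = P₊; (iii) Π₋ P₊ = (k₋ I₄ − Θ) P₊, so that A₀(τ') = e^{(τ'−ε)ρ₋/h} (I₄ − k₋⁻¹ Θ) P₊. -/

import Mathlib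

open Matrix Complex

noncomputable section

/-- Pauli matrix σ₁. -/
def sigma1 : Matrix (Fin 2) (Fin 2) ℂ := !![0, 1; 1, 0]

/-- Pauli matrix σ₂. -/
def sigma2 : Matrix (Fin 2) (Fin 2) ℂ := !![0, -Complex.I; Complex.I, 0]

/-- Pauli matrix σ₃. -/
def sigma3 : Matrix (Fin 2) (Fin 2) ℂ := !![1, 0; 0, -1]

/-- The Dirac matrices α₁, α₂, α₃ in 2×2-block form `[[0, σⱼ],[σⱼ, 0]]`. -/
def diracAlpha : Fin 3 → Matrix (Fin 4) (Fin 4) ℂ :=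
  ![Matrix.reindex finSumFinEquiv finSumFinEquiv (Matrix.fromBlocks 0 sigma1 sigma1 0),
    Matrix.reindex finSumFinEquiv finSumFinEquiv (Matrix.fromBlocks 0 sigma2 sigma2 0),
    Matrix.reindex finSumFinEquiv finSumFinEquiv (Matrix.fromBlocks 0 sigma3 sigma3 0)]

/-- The Dirac matrix β = `[[I₂, 0],[0, −I₂]]`. -/
def diracBeta : Matrix (Fin 4) (Fin 4) ℂ :=
  Matrix.reindex finSumFinEquiv finSumFinEquiv
    (Matrix.fromBlocks (1 : Matrix (Fin 2) (Fin 2) ℂ) 0 0 (-1 : Matrix (Fin 2) (Fin 2) ℂ))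

/-- α·x = x₁α₁ + x₂α₂ + x₃α₃. -/
def alphaDot (x : Fin 3 → ℝ) : Matrix (Fin 4) (Fin 4) ℂ :=
  (x 0 : ℂ) • diracAlpha 0 + (x 1 : ℂ) • diracAlpha 1 + (x 2 : ℂ) • diracAlpha 2

/-- Euclidean inner product on ℝ³. -/
def inner3 (X Y : Fin 3 → ℝ) : ℝ := X 0 * Y 0 + X 1 * Y 1 + X 2 * Y 2

/-- Euclidean norm on ℝ³. -/
def norm3 (X : Fin 3 → ℝ) : ℝ := Real.sqrt (inner3 X X)

/-- Cross product on ℝ³. -/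
def cross3 (X Y : Fin 3 → ℝ) : Fin 3 → ℝ :=
  ![X 1 * Y 2 - X 2 * Y 1, X 2 * Y 0 - X 0 * Y 2, X 0 * Y 1 - X 1 * Y 0]

/-- γ₅ := −i α₁α₂α₃. -/
def gamma5 : Matrix (Fin 4) (Fin 4) ℂ :=
  (-Complex.I) • (diracAlpha 0 * diracAlpha 1 * diracAlpha 2)

/-- S·X := −γ₅ (α·X). -/
def sDot (X : Fin 3 → ℝ) : Matrix (Fin 4) (Fin 4) ℂ := -(gamma5 * alphaDot X)

/-- P₊ := (I₄ − iβ(α·ν))/2. -/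
def Pplus (ν : Fin 3 → ℝ) : Matrix (Fin 4) (Fin 4) ℂ :=
  ((1 : ℂ) / 2) • (1 - Complex.I • (diracBeta * alphaDot ν))

/-- P₋ := (I₄ + iβ(α·ν))/2. -/
def Pminus (ν : Fin 3 → ℝ) : Matrix (Fin 4) (Fin 4) ℂ :=
  ((1 : ℂ) / 2) • (1 + Complex.I • (diracBeta * alphaDot ν))

/-- λ := √(|ν × ξ|² + 1). -/
def lam (ν ξ : Fin 3 → ℝ) : ℝ :=
  Real.sqrt (inner3 (cross3 ν ξ) (cross3 ν ξ) + 1)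

/-- Π₊ := (1/2)(I₄ + λ⁻¹(S·τ − iβ(α·ν))), τ = ν × ξ. -/
def Piplus (ν ξ : Fin 3 → ℝ) : Matrix (Fin 4) (Fin 4) ℂ :=
  ((1 : ℂ) / 2) •
    (1 + ((lam ν ξ : ℂ))⁻¹ • (sDot (cross3 ν ξ) - Complex.I • (diracBeta * alphaDot ν)))

/-- Π₋ := (1/2)(I₄ − λ⁻¹(S·τ − iβ(α·ν))), τ = ν × ξ. -/
def Piminus (ν ξ : Fin 3 → ℝ) : Matrix (Fin 4) (Fin 4) ℂ :=
  ((1 : ℂ) / 2) •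
    (1 - ((lam ν ξ : ℂ))⁻¹ • (sDot (cross3 ν ξ) - Complex.I • (diracBeta * alphaDot ν)))

/-- ρ₊ := (i⟨ν,ξ⟩ + λ)/s. -/
def rhoP (ν ξ : Fin 3 → ℝ) (s : ℝ) : ℂ :=
  (Complex.I * (inner3 ν ξ : ℂ) + (lam ν ξ : ℂ)) / (s : ℂ)

/-- ρ₋ := (i⟨ν,ξ⟩ − λ)/s. -/
def rhoM (ν ξ : Fin 3 → ℝ) (s : ℝ) : ℂ :=
  (Complex.I * (inner3 ν ξ : ℂ) - (lam ν ξ : ℂ)) / (s : ℂ)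

/-- L₀ := s⁻¹ (iα·ν)(α·ξ + β). -/
def L0 (ν ξ : Fin 3 → ℝ) (s : ℝ) : Matrix (Fin 4) (Fin 4) ℂ :=
  ((s : ℂ))⁻¹ • ((Complex.I • alphaDot ν) * (alphaDot ξ + diracBeta))

/-- k₊ := (1 + λ⁻¹)/2. -/
def kPlus (ν ξ : Fin 3 → ℝ) : ℝ := (1 + (lam ν ξ)⁻¹) / 2

/-- k₋ := (1 − λ⁻¹)/2. -/
def kMinus (ν ξ : Fin 3 → ℝ) : ℝ := (1 - (lam ν ξ)⁻¹) / 2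

/-- Θ := (2λ)⁻¹ S·τ, τ = ν × ξ. -/
def theta (ν ξ : Fin 3 → ℝ) : Matrix (Fin 4) (Fin 4) ℂ :=
  ((2 * lam ν ξ : ℝ) : ℂ)⁻¹ • sDot (cross3 ν ξ)

/-- The fundamental solution φ_{m,z,w} of the free Dirac operator. -/
def phiFS (m : ℝ) (z w : ℂ) (x : Fin 3 → ℝ) : Matrix (Fin 4) (Fin 4) ℂ :=
  (Complex.exp (Complex.I * w * (norm3 x : ℂ)) / (4 * (Real.pi : ℂ) * (norm3 x : ℂ))) •
    (z • (1 : Matrix (Fin 4) (Fin 4) ℂ) + (m : ℂ) • diracBeta +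
      ((1 - Complex.I * w * (norm3 x : ℂ)) * Complex.I / ((norm3 x : ℂ) ^ 2)) • alphaDot x)

attribute [local instance] Matrix.normedAddCommGroup Matrix.normedSpace

lemma fse0 : (finSumFinEquiv.symm (0 : Fin 4) : Fin 2 ⊕ Fin 2) = Sum.inl 0 := by decide
lemma fse1 : (finSumFinEquiv.symm (1 : Fin 4) : Fin 2 ⊕ Fin 2) = Sum.inl 1 := by decide
lemma fse2 : (finSumFinEquiv.symm (2 : Fin 4) : Fin 2 ⊕ Fin 2) = Sum.inr 0 := by decide
lemma fse3 : (finSumFinEquiv.symm (3 : Fin 4) : Fin 2 ⊕ Fin 2) = Sum.inr 1 := by decide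

lemma alphaDot_eq (x : Fin 3 → ℝ) : alphaDot x =
    !![0, 0, (x 2 : ℂ), (x 0 : ℂ) - Complex.I * (x 1 : ℂ);
       0, 0, (x 0 : ℂ) + Complex.I * (x 1 : ℂ), -(x 2 : ℂ);
       (x 2 : ℂ), (x 0 : ℂ) - Complex.I * (x 1 : ℂ), 0, 0;
       (x 0 : ℂ) + Complex.I * (x 1 : ℂ), -(x 2 : ℂ), 0, 0] := by
  ext i j
  fin_cases i <;> fin_cases j <;>
    simp [alphaDot, diracAlpha, sigma1, sigma2, sigma3, Matrix.fromBlocks,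
      Matrix.reindex_apply, Matrix.submatrix_apply, fse0, fse1, fse2, fse3, Matrix.vecHead, Matrix.vecTail] <;> ring

lemma beta_eq : diracBeta = !![1,0,0,0; 0,1,0,0; 0,0,-1,0; 0,0,0,-1] := by
  ext i j
  fin_cases i <;> fin_cases j <;>
    simp [diracBeta, Matrix.fromBlocks, Matrix.reindex_apply, Matrix.submatrix_apply,
      fse0, fse1, fse2, fse3, Matrix.vecHead, Matrix.vecTail]

lemma alpha0_eq : diracAlpha 0 = !![0,0,0,1; 0,0,1,0; 0,1,0,0; 1,0,0,0] := by
  ext i j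
  fin_cases i <;> fin_cases j <;>
    simp [diracAlpha, sigma1, Matrix.fromBlocks, Matrix.reindex_apply,
      Matrix.submatrix_apply, fse0, fse1, fse2, fse3, Matrix.vecHead, Matrix.vecTail]

lemma alpha1_eq : diracAlpha 1 =
    !![0,0,0,-Complex.I; 0,0,Complex.I,0; 0,-Complex.I,0,0; Complex.I,0,0,0] := by
  ext i j
  fin_cases i <;> fin_cases j <;>
    simp [diracAlpha, sigma2, Matrix.fromBlocks, Matrix.reindex_apply,
      Matrix.submatrix_apply, fse0, fse1, fse2, fse3, Matrix.vecHead, Matrix.vecTail]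

lemma alpha2_eq : diracAlpha 2 = !![0,0,1,0; 0,0,0,-1; 1,0,0,0; 0,-1,0,0] := by
  ext i j
  fin_cases i <;> fin_cases j <;>
    simp [diracAlpha, sigma3, Matrix.fromBlocks, Matrix.reindex_apply,
      Matrix.submatrix_apply, fse0, fse1, fse2, fse3, Matrix.vecHead, Matrix.vecTail]

lemma gamma5_eq : gamma5 = !![0,0,1,0; 0,0,0,1; 1,0,0,0; 0,1,0,0] := by
  rw [gamma5, alpha0_eq, alpha1_eq, alpha2_eq]
  ext i j
  fin_cases i <;> fin_cases j <;>
    simp [Matrix.mul_apply, Fin.sum_univ_four, Matrix.vecHead, Matrix.vecTail] <;>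
    norm_num [Complex.ext_iff]
lemma I4 : Complex.I ^ 4 = 1 := by
  rw [show (4:ℕ) = 2*2 from rfl, pow_mul, Complex.I_sq]; norm_num

lemma I3 : Complex.I ^ 3 = -Complex.I := by
  rw [pow_succ, Complex.I_sq]; ring

lemma sDot_eq (x : Fin 3 → ℝ) : sDot x =
    !![-(x 2 : ℂ), -((x 0 : ℂ) - Complex.I * (x 1 : ℂ)), 0, 0;
       -((x 0 : ℂ) + Complex.I * (x 1 : ℂ)), (x 2 : ℂ), 0, 0;
       0, 0, -(x 2 : ℂ), -((x 0 : ℂ) - Complex.I * (x 1 : ℂ));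
       0, 0, -((x 0 : ℂ) + Complex.I * (x 1 : ℂ)), (x 2 : ℂ)] := by
  rw [sDot, gamma5_eq, alphaDot_eq]
  ext i j
  fin_cases i <;> fin_cases j <;>
    simp [Matrix.mul_apply, Fin.sum_univ_four, Matrix.vecHead, Matrix.vecTail]

section
variable (ν ξ : Fin 3 → ℝ)

set_option maxHeartbeats 2000000 in
lemma e1 (hν' : ((ν 0 : ℂ))^2 + ((ν 1 : ℂ))^2 + ((ν 2 : ℂ))^2 = 1) :
    (Complex.I • (diracBeta * alphaDot ν)) * (Complex.I • (diracBeta * alphaDot ν)) = 1 := by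
  rw [beta_eq, alphaDot_eq]
  ext i j
  fin_cases i <;> fin_cases j <;>
    simp [Matrix.mul_apply, Fin.sum_univ_four, Matrix.vecHead, Matrix.vecTail,
      Matrix.one_apply] <;>
    first
      | ring1
      | ((try ring_nf); simp only [Complex.I_sq, I4]; linear_combination hν')
      | ((try ring_nf); simp only [Complex.I_sq, I4]; linear_combination -hν')

set_option maxHeartbeats 2000000 in
lemma e2 : sDot (cross3 ν ξ) * (Complex.I • (diracBeta * alphaDot ν)) =
    -((Complex.I • (diracBeta * alphaDot ν)) * sDot (cross3 ν ξ)) := by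
  rw [sDot_eq, beta_eq, alphaDot_eq]
  ext i j
  fin_cases i <;> fin_cases j <;>
    simp [Matrix.mul_apply, Fin.sum_univ_four, Matrix.vecHead, Matrix.vecTail, cross3] <;>
    first
      | ring1
      | ((try ring_nf); simp only [Complex.I_sq, I4, I3]; ring1)

set_option maxHeartbeats 2000000 in
lemma e3 : sDot (cross3 ν ξ) * sDot (cross3 ν ξ) =
    ((inner3 (cross3 ν ξ) (cross3 ν ξ) : ℝ) : ℂ) • 1 := by
  rw [sDot_eq]
  ext i j
  fin_cases i <;> fin_cases j <;>
    simp [Matrix.mul_apply, Fin.sum_univ_four, Matrix.vecHead, Matrix.vecTail, cross3,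
      inner3, Matrix.one_apply] <;>
    push_cast <;>
    first
      | ring1
      | ((try ring_nf); simp only [Complex.I_sq, I4, I3]; ring1)

set_option maxHeartbeats 2000000 in
lemma e4 (hν' : ((ν 0 : ℂ))^2 + ((ν 1 : ℂ))^2 + ((ν 2 : ℂ))^2 = 1) :
    (Complex.I • alphaDot ν) * (alphaDot ξ + diracBeta) =
      (Complex.I * ((inner3 ν ξ : ℝ) : ℂ)) • 1 + sDot (cross3 ν ξ)
        - Complex.I • (diracBeta * alphaDot ν) := by
  rw [beta_eq, sDot_eq, alphaDot_eq ν, alphaDot_eq ξ]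
  ext i j
  fin_cases i <;> fin_cases j <;>
    simp [Matrix.mul_apply, Fin.sum_univ_four, Matrix.vecHead, Matrix.vecTail, cross3,
      inner3, Matrix.one_apply] <;>
    push_cast <;>
    first
      | ring1
      | ((try ring_nf); simp only [Complex.I_sq, I4, I3];
         first
           | ring1
           | linear_combination hν'
           | linear_combination -hν'
           | linear_combination Complex.I * hν'
           | linear_combination (-Complex.I) * hν')

end

section abstractLayer
variable (ν ξ : Fin 3 → ℝ)

private abbrev cMat (ν : Fin 3 → ℝ) : Matrix (Fin 4) (Fin 4) ℂ :=
  Complex.I • (diracBeta * alphaDot ν)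

private abbrev TMat (ν ξ : Fin 3 → ℝ) : Matrix (Fin 4) (Fin 4) ℂ := sDot (cross3 ν ξ)

lemma hPdef : Pplus ν = ((1:ℂ)/2) • (1 - cMat ν) := rfl

lemma p1 (hν' : ((ν 0 : ℂ))^2 + ((ν 1 : ℂ))^2 + ((ν 2 : ℂ))^2 = 1) :
    cMat ν * Pplus ν = -(Pplus ν) := by
  rw [hPdef, mul_smul_comm, mul_sub, mul_one, e1 ν hν']
  module

lemma p2 (hν' : ((ν 0 : ℂ))^2 + ((ν 1 : ℂ))^2 + ((ν 2 : ℂ))^2 = 1) :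
    Pplus ν * cMat ν = -(Pplus ν) := by
  rw [hPdef, smul_mul_assoc, sub_mul, one_mul, e1 ν hν']
  module

lemma p3 (hν' : ((ν 0 : ℂ))^2 + ((ν 1 : ℂ))^2 + ((ν 2 : ℂ))^2 = 1) :
    Pplus ν * Pplus ν = Pplus ν := by
  conv_lhs => rw [show Pplus ν * Pplus ν
    = Pplus ν * (((1:ℂ)/2) • (1 - cMat ν)) from by rw [← hPdef]]
  rw [mul_smul_comm, mul_sub, mul_one, p2 ν hν']
  rw [hPdef]; module

lemma q1 : Pplus ν * TMat ν ξ = TMat ν ξ * (((1:ℂ)/2) • (1 + cMat ν)) := by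
  rw [hPdef, smul_mul_assoc, sub_mul, one_mul, mul_smul_comm, mul_add, mul_one, e2 ν ξ]
  module

lemma q2 (hν' : ((ν 0 : ℂ))^2 + ((ν 1 : ℂ))^2 + ((ν 2 : ℂ))^2 = 1) :
    (((1:ℂ)/2) • (1 + cMat ν)) * Pplus ν = 0 := by
  rw [smul_mul_assoc, add_mul, one_mul, p1 ν hν']
  module

lemma hPTP (hν' : ((ν 0 : ℂ))^2 + ((ν 1 : ℂ))^2 + ((ν 2 : ℂ))^2 = 1) :
    Pplus ν * (TMat ν ξ * Pplus ν) = 0 := by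
  rw [← mul_assoc, q1, mul_assoc, q2 ν hν', mul_zero]

lemma hcT : cMat ν * TMat ν ξ = -(TMat ν ξ * cMat ν) := by
  rw [e2 ν ξ, neg_neg]

lemma hcTP (hν' : ((ν 0 : ℂ))^2 + ((ν 1 : ℂ))^2 + ((ν 2 : ℂ))^2 = 1) :
    cMat ν * (TMat ν ξ * Pplus ν) = TMat ν ξ * Pplus ν := by
  rw [← mul_assoc, hcT, neg_mul, mul_assoc, p1 ν hν', mul_neg, neg_neg]

end abstractLayer

section keyLemmas
variable (ν ξ : Fin 3 → ℝ)

lemma hThetaDef : theta ν ξ = ((2 * lam ν ξ : ℝ) : ℂ)⁻¹ • TMat ν ξ := rfl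

lemma hPiDef : Piminus ν ξ =
    ((1:ℂ)/2) • (1 - ((lam ν ξ : ℝ) : ℂ)⁻¹ • (TMat ν ξ - cMat ν)) := rfl

lemma key1 (hν' : ((ν 0 : ℂ))^2 + ((ν 1 : ℂ))^2 + ((ν 2 : ℂ))^2 = 1)
    (hl0 : ((lam ν ξ : ℝ) : ℂ) ≠ 0)
    (hkc : ((kMinus ν ξ : ℝ) : ℂ) = (1 - ((lam ν ξ : ℝ) : ℂ)⁻¹) / 2) :
    Piminus ν ξ * Pplus ν = (((kMinus ν ξ : ℝ) : ℂ) • 1 - theta ν ξ) * Pplus ν := by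
  rw [hPiDef, hThetaDef, smul_mul_assoc, sub_mul, one_mul, smul_mul_assoc, sub_mul,
    p1 ν hν', sub_mul, smul_mul_assoc, smul_mul_assoc, one_mul, hkc]
  push_cast
  match_scalars <;> field_simp <;>
    first
      | rfl
      | ring1
      | exact Or.inl (by ring)

lemma key1' (hν' : ((ν 0 : ℂ))^2 + ((ν 1 : ℂ))^2 + ((ν 2 : ℂ))^2 = 1)
    (hl0 : ((lam ν ξ : ℝ) : ℂ) ≠ 0)
    (hkc : ((kMinus ν ξ : ℝ) : ℂ) = (1 - ((lam ν ξ : ℝ) : ℂ)⁻¹) / 2) :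
    Piminus ν ξ * Pplus ν = ((kMinus ν ξ : ℝ) : ℂ) • Pplus ν
      - ((2 * lam ν ξ : ℝ) : ℂ)⁻¹ • (TMat ν ξ * Pplus ν) := by
  rw [key1 ν ξ hν' hl0 hkc, hThetaDef, sub_mul, smul_mul_assoc, one_mul, smul_mul_assoc]

lemma key2 (hν' : ((ν 0 : ℂ))^2 + ((ν 1 : ℂ))^2 + ((ν 2 : ℂ))^2 = 1)
    (hl0 : ((lam ν ξ : ℝ) : ℂ) ≠ 0)
    (hkc : ((kMinus ν ξ : ℝ) : ℂ) = (1 - ((lam ν ξ : ℝ) : ℂ)⁻¹) / 2) :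
    Pplus ν * (Piminus ν ξ * Pplus ν) = ((kMinus ν ξ : ℝ) : ℂ) • Pplus ν := by
  rw [key1' ν ξ hν' hl0 hkc, mul_sub, mul_smul_comm, mul_smul_comm, p3 ν hν',
    hPTP ν ξ hν', smul_zero, sub_zero]

end keyLemmas

section key3sec
variable (ν ξ : Fin 3 → ℝ)

lemma hTTP (hl2 : ((lam ν ξ : ℝ) : ℂ)^2 = ((inner3 (cross3 ν ξ) (cross3 ν ξ) : ℝ) : ℂ) + 1) :
    TMat ν ξ * (TMat ν ξ * Pplus ν) = (((lam ν ξ : ℝ) : ℂ)^2 - 1) • Pplus ν := by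
  rw [← mul_assoc, e3 ν ξ, smul_mul_assoc, one_mul, hl2]
  module

lemma hL0Def (s : ℝ) : L0 ν ξ s = ((s : ℂ))⁻¹ • ((Complex.I • alphaDot ν) * (alphaDot ξ + diracBeta)) := rfl

lemma key3 (s : ℝ) (hs0 : (s:ℂ) ≠ 0)
    (hν' : ((ν 0 : ℂ))^2 + ((ν 1 : ℂ))^2 + ((ν 2 : ℂ))^2 = 1)
    (hl0 : ((lam ν ξ : ℝ) : ℂ) ≠ 0)
    (hl2 : ((lam ν ξ : ℝ) : ℂ)^2 = ((inner3 (cross3 ν ξ) (cross3 ν ξ) : ℝ) : ℂ) + 1)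
    (hkc : ((kMinus ν ξ : ℝ) : ℂ) = (1 - ((lam ν ξ : ℝ) : ℂ)⁻¹) / 2) :
    L0 ν ξ s * (Piminus ν ξ * Pplus ν) = rhoM ν ξ s • (Piminus ν ξ * Pplus ν) := by
  have P1 := p1 ν hν'
  have HcTP := hcTP ν ξ hν'
  have HTTP := hTTP ν ξ hl2
  have HPTP := hPTP ν ξ hν'
  have HX := key1' ν ξ hν' hl0 hkc
  have HL0 : L0 ν ξ s = ((s : ℂ))⁻¹ • ((Complex.I * ((inner3 ν ξ : ℝ) : ℂ)) • 1
      + TMat ν ξ - cMat ν) := by rw [hL0Def, e4 ν ξ hν']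
  rw [HX, HL0, rhoM]
  set T := TMat ν ξ with hT
  set c := cMat ν with hc
  set P := Pplus ν with hP
  simp only [smul_mul_assoc, mul_smul_comm, add_mul, sub_mul, mul_sub, mul_add,
    smul_sub, smul_add, smul_smul, one_mul, mul_one, neg_mul, mul_neg,
    HTTP, HcTP, P1, HPTP]
  match_scalars <;>
    · rw [hkc]
      push_cast
      field_simp
      ring
end key3sec
-- STATEMENT 14

theorem stmt14 (ν ξ : Fin 3 → ℝ) (s : ℝ) (hν : norm3 ν = 1) (hs : 0 < s)
    (hτ : cross3 ν ξ ≠ 0) (h ε : ℝ) (hh : 0 < h) :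
    ∀ A0 : ℝ → Matrix (Fin 4) (Fin 4) ℂ,
      A0 = (fun τ' : ℝ =>
        Complex.exp (((τ' - ε : ℝ) : ℂ) * rhoM ν ξ s / (h : ℂ)) •
          (((kMinus ν ξ : ℝ) : ℂ)⁻¹ • (Piminus ν ξ * Pplus ν))) →
      ((∀ τ' : ℝ, DifferentiableAt ℝ A0 τ') ∧
        (∀ τ' : ℝ, (h : ℂ) • deriv A0 τ' = L0 ν ξ s * A0 τ')) ∧
      Pplus ν * A0 ε = Pplus ν ∧
      Piminus ν ξ * Pplus ν = (((kMinus ν ξ : ℝ) : ℂ) • 1 - theta ν ξ) * Pplus ν ∧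
      (∀ τ' : ℝ, A0 τ' = Complex.exp (((τ' - ε : ℝ) : ℂ) * rhoM ν ξ s / (h : ℂ)) •
        ((1 - ((kMinus ν ξ : ℝ) : ℂ)⁻¹ • theta ν ξ) * Pplus ν)) := by
  -- scalar facts
  have hinn : inner3 ν ν = 1 := by
    have h0 : 0 ≤ inner3 ν ν := by
      rw [inner3]
      nlinarith [mul_self_nonneg (ν 0), mul_self_nonneg (ν 1), mul_self_nonneg (ν 2)]
    have := hν
    rw [norm3] at this
    nlinarith [Real.sq_sqrt h0, this]
  have hν' : ((ν 0 : ℂ))^2 + ((ν 1 : ℂ))^2 + ((ν 2 : ℂ))^2 = 1 := by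
    rw [inner3] at hinn
    have : (ν 0)^2 + (ν 1)^2 + (ν 2)^2 = 1 := by linear_combination hinn
    exact_mod_cast congrArg (fun r : ℝ => (r : ℂ)) this
  have hι : 0 < inner3 (cross3 ν ξ) (cross3 ν ξ) := by
    have hex : cross3 ν ξ 0 ≠ 0 ∨ cross3 ν ξ 1 ≠ 0 ∨ cross3 ν ξ 2 ≠ 0 := by
      by_contra hcon
      push_neg at hcon
      obtain ⟨h30, h31, h32⟩ := hcon
      apply hτ
      funext i
      fin_cases i
      · exact h30
      · exact h31
      · exact h32
    rw [inner3]
    rcases hex with hi | hi | hi <;>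
      nlinarith [mul_self_nonneg (cross3 ν ξ 0), mul_self_nonneg (cross3 ν ξ 1),
        mul_self_nonneg (cross3 ν ξ 2), mul_self_pos.mpr hi]
  have hlgt : 1 < lam ν ξ := by
    rw [lam]
    nlinarith [Real.sq_sqrt (show (0:ℝ) ≤ inner3 (cross3 ν ξ) (cross3 ν ξ) + 1 by linarith),
      Real.sqrt_nonneg (inner3 (cross3 ν ξ) (cross3 ν ξ) + 1)]
  have hlpos : 0 < lam ν ξ := by linarith
  have hl0 : ((lam ν ξ : ℝ) : ℂ) ≠ 0 := by
    exact_mod_cast Complex.ofReal_ne_zero.mpr (ne_of_gt hlpos)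
  have hl2 : ((lam ν ξ : ℝ) : ℂ)^2
      = ((inner3 (cross3 ν ξ) (cross3 ν ξ) : ℝ) : ℂ) + 1 := by
    have h2 : (lam ν ξ)^2 = inner3 (cross3 ν ξ) (cross3 ν ξ) + 1 := by
      rw [lam]; exact Real.sq_sqrt (by linarith)
    exact_mod_cast congrArg (fun r : ℝ => (r : ℂ)) h2
  have hkpos : 0 < kMinus ν ξ := by
    rw [kMinus]
    have : (lam ν ξ)⁻¹ < 1 := inv_lt_one_of_one_lt₀ hlgt
    linarith
  have hk0 : ((kMinus ν ξ : ℝ) : ℂ) ≠ 0 :=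
    Complex.ofReal_ne_zero.mpr (ne_of_gt hkpos)
  have hkc : ((kMinus ν ξ : ℝ) : ℂ) = (1 - ((lam ν ξ : ℝ) : ℂ)⁻¹) / 2 := by
    rw [kMinus]; push_cast; ring
  have hs0 : (s : ℂ) ≠ 0 := Complex.ofReal_ne_zero.mpr (ne_of_gt hs)
  have hh0 : (h : ℂ) ≠ 0 := Complex.ofReal_ne_zero.mpr (ne_of_gt hh)
  intro A0 hA0
  set ρ : ℂ := rhoM ν ξ s with hρ
  set C : Matrix (Fin 4) (Fin 4) ℂ :=
    ((kMinus ν ξ : ℝ) : ℂ)⁻¹ • (Piminus ν ξ * Pplus ν) with hC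
  have hd : ∀ τ' : ℝ, HasDerivAt A0
      ((Complex.exp (((τ' - ε : ℝ) : ℂ) * ρ / h) * (ρ / h)) • C) τ' := by
    intro τ'
    have h1 : HasDerivAt (fun t : ℝ => ((t : ℂ))) 1 τ' := by
      simpa using (hasDerivAt_id τ').ofReal_comp
    have h2 := (h1.sub_const (ε : ℂ)).mul_const (ρ / (h : ℂ))
    have h3 := h2.cexp
    have hfe : A0 = fun t : ℝ =>
        Complex.exp (((t : ℂ) - (ε : ℂ)) * (ρ / (h : ℂ))) • C := by
      rw [hA0]; funext t; push_cast; rw [mul_div_assoc]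
    rw [hfe]
    have h4 := h3.smul_const C
    convert h4 using 2 <;> push_cast <;> try ring
    all_goals rfl
  refine ⟨⟨fun τ' => (hd τ').differentiableAt, fun τ' => ?_⟩, ?_, ?_, fun τ' => ?_⟩
  · rw [show deriv A0 τ' = _ from (hd τ').deriv, hA0]
    simp only [hC]
    rw [mul_smul_comm, mul_smul_comm, key3 ν ξ s hs0 hν' hl0 hl2 hkc, ← hρ]
    rw [smul_smul, smul_smul, smul_smul, smul_smul]
    congr 1
    field_simp
    try ring
  · rw [hA0]
    simp only [sub_self, Complex.ofReal_zero, zero_mul, zero_div, Complex.exp_zero,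
      one_smul, hC]
    rw [mul_smul_comm, key2 ν ξ hν' hl0 hkc, smul_smul, inv_mul_cancel₀ hk0, one_smul]
  · exact key1 ν ξ hν' hl0 hkc
  · rw [hA0]
    congr 1
    rw [hC, key1 ν ξ hν' hl0 hkc, sub_mul, smul_mul_assoc, one_mul, smul_sub, smul_smul,
      inv_mul_cancel₀ hk0, one_smul, sub_mul, one_mul, smul_mul_assoc]

end
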